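/- Every finite undirected multigraph G (possibly with self-loops) admits an orientation of its edges such that every vertex v has in-degree at least ⌊d(v)/2⌋, where d(v) denotes the degree of v (self-loops counted once). -/

import Mathlib

set_option maxHeartbeats 1000000
open List

theorem permLift {α β : Type*} [DecidableEq α] (f : α → β) :
    ∀ (l : List β) (ol : List α), (ol.map f).Perm l → ∃ ol' : List α, ol'.map f = l ∧ ol'.Perm ol := by
  intro l
  induction l with
  | nil => intro ol h; obtain rfl := map_eq_nil_iff.mp h.eq_nil; exact ⟨[], rfl, Perm.refl _⟩
  | cons b l ih =>
    intro ol h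
    have hb : b ∈ ol.map f := h.mem_iff.mpr mem_cons_self
    obtain ⟨a, ha, rfl⟩ := mem_map.mp hb
    have hp : ol.Perm (a :: ol.erase a) := perm_cons_erase ha
    have h2 : ((ol.erase a).map f).Perm l := ((hp.map f).symm.trans h).cons_inv
    obtain ⟨ol', h3, h4⟩ := ih _ h2
    exact ⟨a :: ol', by simp [h3], (h4.cons a).trans hp.symm⟩

theorem isDiag_exists {α : Type*} (x : Sym2 α) (h : x.IsDiag) : ∃ a, x = s(a,a) := by
  induction x using Sym2.ind with
  | _ v w => exact ⟨v, by have := Sym2.mk_isDiag_iff.mp h; subst this; rfl⟩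
open List

theorem key {V : Type*} [DecidableEq V] :
    ∀ (n : ℕ) (l : List (Sym2 V)), l.length ≤ n →
    ∃ ol : List (V × V), ((ol.map (fun p => s(p.1, p.2))).Perm l) ∧
      ∀ v : V, (l.countP (fun s => v ∈ s) + l.countP (fun s => s = s(v,v))) / 2 ≤
        ol.countP (fun p => p.2 = v) := by
  intro n
  induction n with
  | zero =>
    intro l hl
    obtain rfl : l = [] := length_eq_zero_iff.mp (Nat.le_zero.mp hl)
    exact ⟨[], Perm.refl _, fun v => by simp⟩
  | succ n ih =>
    intro l hl
    by_cases hloop : ∃ x ∈ l, x.IsDiag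
    · obtain ⟨x, hx, hdiag⟩ := hloop
      obtain ⟨u, rfl⟩ := isDiag_exists x hdiag
      have hperm : l.Perm (s(u,u) :: l.erase s(u,u)) := perm_cons_erase hx
      have hlen : (l.erase s(u,u)).length ≤ n := by
        have := length_erase_of_mem hx
        have : l ≠ [] := ne_nil_of_mem hx
        have : l.length ≠ 0 := by simpa using this
        omega
      obtain ⟨ol', hperm', hcount'⟩ := ih (l.erase s(u,u)) hlen
      refine ⟨(u,u) :: ol', ?_, ?_⟩
      · exact ((hperm'.cons _)).trans hperm.symm
      · intro v
        rw [hperm.countP_eq (fun s => v ∈ s), hperm.countP_eq (fun s => s = s(v,v))]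
        have h := hcount' v
        simp only [countP_cons, Sym2.mem_iff, Sym2.eq_iff]
        rcases eq_or_ne u v with rfl | hne
        · simp only [decide_eq_true_eq, or_self, and_self, if_pos]
          omega
        · simp [hne, hne.symm]
          omega
    · rcases l with _ | ⟨a, t⟩
      · exact ⟨[], Perm.refl _, fun v => by simp⟩
      revert hloop hl
      induction a using Sym2.ind with
      | _ v w =>
      intro hl hloop
      have hvw : v ≠ w := by
        intro h; exact hloop ⟨s(v,w), mem_cons_self, by simp [Sym2.mk_isDiag_iff, h]⟩
      by_cases hv : ∃ x ∈ t, v ∈ x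
      · obtain ⟨e, het, hve⟩ := hv
        obtain ⟨c, rfl⟩ := Sym2.mem_iff_exists.mp hve
        have hvc : v ≠ c := by
          intro h; exact hloop ⟨s(v,c), mem_cons_of_mem _ het, by simp [Sym2.mk_isDiag_iff, h]⟩
        obtain ⟨t', htp, htl⟩ : ∃ t', t.Perm (s(v,c) :: t') ∧ t'.length = t.length - 1 :=
          ⟨_, perm_cons_erase het, length_erase_of_mem het⟩
        have hlen : (s(w,c) :: t').length ≤ n := by
          have h2 : t ≠ [] := ne_nil_of_mem het
          have h3 : t.length ≠ 0 := by simpa using h2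
          simp only [length_cons] at hl ⊢
          omega
        obtain ⟨ol', hperm', hcount'⟩ := ih _ hlen
        have hmem : s(w,c) ∈ ol'.map (fun p => s(p.1,p.2)) := hperm'.mem_iff.mpr mem_cons_self
        obtain ⟨p, hp, hfp⟩ := mem_map.mp hmem
        obtain ⟨ol2, hpe⟩ : ∃ ol2, ol'.Perm (p :: ol2) := ⟨_, perm_cons_erase hp⟩
        have herase : (ol2.map (fun q => s(q.1,q.2))).Perm t' := by
          have h5 := (hpe.map (fun q : _ × _ => s(q.1,q.2))).symm.trans hperm'
          rw [map_cons, hfp] at h5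
          exact h5.cons_inv
        have hlp : (s(v,w) :: t).Perm (s(v,w) :: s(v,c) :: t') := htp.cons _
        obtain ⟨p1, p2⟩ := p
        rcases Sym2.eq_iff.mp hfp with ⟨h1, h2⟩ | ⟨h1, h2⟩
        · -- p = (w, c)
          have hp1 : p1 = w := h1
          have hp2 : p2 = c := h2
          refine ⟨(p1,v) :: (v,p2) :: ol2, ?_, ?_⟩
          · have hm : ((p1,v) :: (v,p2) :: ol2).map (fun q : _ × _ => s(q.1,q.2))
                = s(p1,v) :: s(v,p2) :: ol2.map (fun q : _ × _ => s(q.1,q.2)) := rfl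
            rw [hm, Sym2.eq_swap (a := p1), hp1, hp2]
            exact ((herase.cons _).cons _).trans hlp.symm
          · intro u
            have h := hcount' u
            rw [hpe.countP_eq] at h
            rw [hlp.countP_eq, hlp.countP_eq]
            simp only [countP_cons, decide_eq_true_eq, Sym2.mem_iff, Sym2.eq_iff, hp1, hp2,
              @eq_comm _ u] at h ⊢
            by_cases h1 : v = u <;> by_cases h2 : w = u <;> by_cases h3 : c = u <;>
              first
              | (simp_all <;> omega)
              | simp_all
              | omega
        · -- p = (c, w)
          have hp1 : p1 = c := h1
          have hp2 : p2 = w := h2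
          refine ⟨(v,p2) :: (p1,v) :: ol2, ?_, ?_⟩
          · have hm : ((v,p2) :: (p1,v) :: ol2).map (fun q : _ × _ => s(q.1,q.2))
                = s(v,p2) :: s(p1,v) :: ol2.map (fun q : _ × _ => s(q.1,q.2)) := rfl
            rw [hm, Sym2.eq_swap (a := p1), hp1, hp2]
            exact ((herase.cons _).cons _).trans hlp.symm
          · intro u
            have h := hcount' u
            rw [hpe.countP_eq] at h
            rw [hlp.countP_eq, hlp.countP_eq]
            simp only [countP_cons, decide_eq_true_eq, Sym2.mem_iff, Sym2.eq_iff, hp1, hp2,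
              @eq_comm _ u] at h ⊢
            by_cases h1 : v = u <;> by_cases h2 : w = u <;> by_cases h3 : c = u <;>
              first
              | (simp_all <;> omega)
              | simp_all
              | omega
      · by_cases hw : ∃ x ∈ t, w ∈ x
        · obtain ⟨e, het, hwe⟩ := hw
          obtain ⟨c, rfl⟩ := Sym2.mem_iff_exists.mp hwe
          have hwc : w ≠ c := by
            intro h; exact hloop ⟨s(w,c), mem_cons_of_mem _ het, by simp [Sym2.mk_isDiag_iff, h]⟩
          obtain ⟨t', htp, htl⟩ : ∃ t', t.Perm (s(w,c) :: t') ∧ t'.length = t.length - 1 :=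
            ⟨_, perm_cons_erase het, length_erase_of_mem het⟩
          have hlen : (s(v,c) :: t').length ≤ n := by
            have h2 : t ≠ [] := ne_nil_of_mem het
            have h3 : t.length ≠ 0 := by simpa using h2
            simp only [length_cons] at hl ⊢
            omega
          obtain ⟨ol', hperm', hcount'⟩ := ih _ hlen
          have hmem : s(v,c) ∈ ol'.map (fun p => s(p.1,p.2)) := hperm'.mem_iff.mpr mem_cons_self
          obtain ⟨p, hp, hfp⟩ := mem_map.mp hmem
          obtain ⟨ol2, hpe⟩ : ∃ ol2, ol'.Perm (p :: ol2) := ⟨_, perm_cons_erase hp⟩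
          have herase : (ol2.map (fun q => s(q.1,q.2))).Perm t' := by
            have h5 := (hpe.map (fun q : _ × _ => s(q.1,q.2))).symm.trans hperm'
            rw [map_cons, hfp] at h5
            exact h5.cons_inv
          have hlp : (s(v,w) :: t).Perm (s(v,w) :: s(w,c) :: t') := htp.cons _
          obtain ⟨p1, p2⟩ := p
          rcases Sym2.eq_iff.mp hfp with ⟨h1, h2⟩ | ⟨h1, h2⟩
          · -- p = (v, c)
            have hp1 : p1 = v := h1
            have hp2 : p2 = c := h2
            refine ⟨(p1,w) :: (w,p2) :: ol2, ?_, ?_⟩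
            · have hm : ((p1,w) :: (w,p2) :: ol2).map (fun q : _ × _ => s(q.1,q.2))
                  = s(p1,w) :: s(w,p2) :: ol2.map (fun q : _ × _ => s(q.1,q.2)) := rfl
              rw [hm, hp1, hp2]
              exact ((herase.cons _).cons _).trans hlp.symm
            · intro u
              have h := hcount' u
              rw [hpe.countP_eq] at h
              rw [hlp.countP_eq, hlp.countP_eq]
              simp only [countP_cons, decide_eq_true_eq, Sym2.mem_iff, Sym2.eq_iff, hp1, hp2,
                @eq_comm _ u] at h ⊢
              by_cases h1 : v = u <;> by_cases h2 : w = u <;> by_cases h3 : c = u <;>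
                first
                | (simp_all <;> omega)
                | simp_all
                | omega
          · -- p = (c, v)
            have hp1 : p1 = c := h1
            have hp2 : p2 = v := h2
            refine ⟨(w,p2) :: (p1,w) :: ol2, ?_, ?_⟩
            · have hm : ((w,p2) :: (p1,w) :: ol2).map (fun q : _ × _ => s(q.1,q.2))
                  = s(w,p2) :: s(p1,w) :: ol2.map (fun q : _ × _ => s(q.1,q.2)) := rfl
              rw [hm, hp1, hp2, Sym2.eq_swap (a := w) (b := v), Sym2.eq_swap (a := c) (b := w)]
              exact ((herase.cons _).cons _).trans hlp.symm
            · intro u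
              have h := hcount' u
              rw [hpe.countP_eq] at h
              rw [hlp.countP_eq, hlp.countP_eq]
              simp only [countP_cons, decide_eq_true_eq, Sym2.mem_iff, Sym2.eq_iff, hp1, hp2,
                @eq_comm _ u] at h ⊢
              by_cases h1 : v = u <;> by_cases h2 : w = u <;> by_cases h3 : c = u <;>
                first
                | (simp_all <;> omega)
                | simp_all
                | omega
        · obtain ⟨ol', hperm', hcount'⟩ := ih t (by simp only [length_cons] at hl; omega)
          refine ⟨(v,w) :: ol', hperm'.cons _, ?_⟩
          intro u
          have h := hcount' u
          have hA : t.countP (fun s => decide (v ∈ s)) = 0 :=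
            countP_eq_zero.mpr (fun x hx hmem => hv ⟨x, hx, by simpa using hmem⟩)
          have hB : t.countP (fun s => decide (s = s(v,v))) = 0 :=
            countP_eq_zero.mpr (fun x hx hmem => by
              have : x = s(v,v) := by simpa using hmem
              exact hv ⟨x, hx, by simp [this]⟩)
          have hA' : t.countP (fun s => decide (w ∈ s)) = 0 :=
            countP_eq_zero.mpr (fun x hx hmem => hw ⟨x, hx, by simpa using hmem⟩)
          have hB' : t.countP (fun s => decide (s = s(w,w))) = 0 :=
            countP_eq_zero.mpr (fun x hx hmem => by
              have : x = s(w,w) := by simpa using hmem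
              exact hw ⟨x, hx, by simp [this]⟩)
          simp only [countP_cons, decide_eq_true_eq, Sym2.mem_iff, Sym2.eq_iff,
            @eq_comm _ u] at h ⊢
          by_cases h1 : v = u <;> by_cases h2 : w = u <;>
            first
            | (simp_all <;> omega)
            | omega
            | (simp_all
               have hA0 : countP (fun s : Sym2 V => decide (u ∈ s)) t = 0 := by
                 rw [countP_eq_zero]
                 intro x hx
                 first
                 | simpa using hv x hx
                 | simpa using hw x hx
               have hB0 : countP (fun s : Sym2 V => decide (s = s(u,u))) t = 0 := by
                 rw [countP_eq_zero]
                 intro x hx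
                 first
                 | simpa using hB x hx
                 | simpa using hB' x hx
               omega)


theorem countP_ofFn {α : Type*} : ∀ {n : ℕ} (g : Fin n → α) (p : α → Bool),
    (List.ofFn g).countP p = (Finset.univ.filter (fun i => p (g i))).card := by
  intro n
  induction n with
  | zero => intro g p; simp
  | succ n ih =>
    intro g p
    rw [List.ofFn_succ, countP_cons, ih, Finset.card_filter, Finset.card_filter,
      Fin.sum_univ_succ]
    omega


/-- Hakimi's orientation theorem: every finite multigraph (with self-loops) admits an
orientation where each vertex has in-degree at least ⌊d(v)/2⌋ (self-loops counted once
in the degree, and a self-loop contributes one to the in-degree of its vertex). -/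
theorem stmt6 {V E : Type*} [Fintype V] [Fintype E] [DecidableEq V]
    (ends : E → Sym2 V) :
    ∃ o : E → V × V,
      (∀ e : E, s((o e).1, (o e).2) = ends e) ∧
      ∀ v : V,
        (Finset.univ.filter (fun e : E => v ∈ ends e)).card / 2 ≤
          (Finset.univ.filter (fun e : E => (o e).2 = v)).card := by
  classical
  obtain ⟨n, ⟨eqv⟩⟩ : ∃ n, Nonempty (E ≃ Fin n) := ⟨Fintype.card E, ⟨Fintype.equivFin E⟩⟩
  set l : List (Sym2 V) := List.ofFn (fun i => ends (eqv.symm i)) with hldef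
  obtain ⟨ol0, hperm0, hcount⟩ := key l.length l le_rfl
  obtain ⟨ol, hmap, holp⟩ := permLift _ l ol0 hperm0
  have hlen : n = ol.length := by
    have := congrArg List.length hmap
    simp only [length_map, hldef, length_ofFn] at this
    omega
  subst hlen
  refine ⟨fun e => ol[(eqv e : ℕ)]'(eqv e).2, ?_, ?_⟩
  · intro e
    have h1 : (ol.map (fun p : V × V => s(p.1, p.2)))[(eqv e : ℕ)]'(by simpa using (eqv e).2)
        = s((ol[(eqv e : ℕ)]'(eqv e).2).1, (ol[(eqv e : ℕ)]'(eqv e).2).2) := by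
      simp [List.getElem_map]
    rw [← h1]
    simp only [hmap, hldef, List.getElem_ofFn]
    simp
  · intro v
    have e1 : (Finset.univ.filter (fun e : E => v ∈ ends e)).card
        = (Finset.univ.filter (fun i : Fin ol.length => v ∈ ends (eqv.symm i))).card := by
      apply Finset.card_bij' (fun e _ => eqv e) (fun i _ => eqv.symm i) <;>
        simp
    have e2 : (Finset.univ.filter (fun e : E => (ol[(eqv e : ℕ)]'(eqv e).2).2 = v)).card
        = (Finset.univ.filter (fun i : Fin ol.length => (ol[(i : ℕ)]'i.2).2 = v)).card := by
      apply Finset.card_bij' (fun e _ => eqv e) (fun i _ => eqv.symm i) <;>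
        simp
    have e3 : l.countP (fun s => decide (v ∈ s))
        = (Finset.univ.filter (fun i : Fin ol.length => v ∈ ends (eqv.symm i))).card := by
      rw [hldef, countP_ofFn]
      simp
    have e4 : ol.countP (fun p => decide (p.2 = v))
        = (Finset.univ.filter (fun i : Fin ol.length => (ol[(i : ℕ)]'i.2).2 = v)).card := by
      conv_lhs => rw [← List.ofFn_getElem (xs := ol)]
      rw [countP_ofFn]
      simp
    have h := hcount v
    have e5 := holp.countP_eq (fun p : V × V => decide (p.2 = v))
    rw [e1, e2, ← e3, ← e4]
    have : l.countP (fun s => decide (v ∈ s)) / 2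
        ≤ (l.countP (fun s => decide (v ∈ s)) + l.countP (fun s => decide (s = s(v,v)))) / 2 :=
      Nat.div_le_div_right (Nat.le_add_right _ _)
    omega
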